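/- Let n ≥ 1, let R ⊆ [n]×[n] and let C_k(i,j) ∈ ℤ be given for all i,j,k ∈ [n], with not all of C_1(i,j),…,C_n(i,j) zero for each (i,j) ∈ R. Let c : ℕ → X be a finite colouring admitting no monochromatic solution of the associated linear system L(R,{C_k(i,j)}): there are no positive integers z_1,…,z_n with c(z_1) = ⋯ = c(z_n) and a potential κ : [n] → ℤ satisfying κ(j) − κ(i) = ∑_{m=1}^n C_m(i,j)·z_m for all (i,j) ∈ R. Define f : ℕ → X by f(x) = c(Ω(x)) for x ≥ 2 (and arbitrarily on 0 and 1), where Ω(x) denotes the number of prime factors of x counted with multiplicity. Then f admits no monochromatic solution of the exponential system E(R,{C_k(i,j)}): there are no naturals X_1,…,X_n,Y_1,…,Y_n, all > 1, all of the same colour under f, with (X_i : ℝ)^(∏_{k=1}^n (Y_k : ℝ)^{C_k(i,j)}) = X_j for every (i,j) ∈ R. -/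
import Mathlib

open Finset

lemma omega_pow (a b : ℕ) (ha : a ≠ 0) :
    ArithmeticFunction.cardFactors (a ^ b) = b * ArithmeticFunction.cardFactors a := by
  induction b with
  | zero => simp
  | succ k ih =>
    rw [pow_succ, ArithmeticFunction.cardFactors_mul (pow_ne_zero _ ha) ha, ih]
    ring

lemma omega_prod {ι : Type*} (s : Finset ι) (g : ι → ℕ) (hg : ∀ k ∈ s, g k ≠ 0) :
    ArithmeticFunction.cardFactors (∏ k ∈ s, g k)
      = ∑ k ∈ s, ArithmeticFunction.cardFactors (g k) := by
  induction s using Finset.cons_induction with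
  | empty => simp
  | cons a s ha ih =>
    rw [Finset.prod_cons, Finset.sum_cons,
      ArithmeticFunction.cardFactors_mul (hg a (Finset.mem_cons_self a s))
        (Finset.prod_ne_zero_iff.mpr fun k hk => hg k (Finset.mem_cons_of_mem hk)),
      ih fun k hk => hg k (Finset.mem_cons_of_mem hk)]

lemma omega_pos {a : ℕ} (ha : 1 < a) : 0 < ArithmeticFunction.cardFactors a := by
  rw [ArithmeticFunction.cardFactors_apply, List.length_pos_iff]
  intro h
  rcases (Nat.primeFactorsList_eq_nil _).mp h with h | h <;> omega

theorem no_mono_exp_solution_of_no_mono_lin_solution (n : ℕ) (hn : 1 ≤ n)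
    (R : Set (Fin n × Fin n)) (C : Fin n → Fin n → Fin n → ℤ)
    (hC : ∀ i j, (i, j) ∈ R → ∃ k, C k i j ≠ 0)
    (X : Type) [Finite X] (c : ℕ → X)
    (hc : ¬ ∃ z : Fin n → ℕ, (∀ i, 0 < z i) ∧ (∃ col : X, ∀ i, c (z i) = col) ∧
      ∃ κ : Fin n → ℤ, ∀ i j, (i, j) ∈ R →
        κ j - κ i = ∑ m, C m i j * (z m : ℤ))
    (f : ℕ → X)
    (hf : ∀ x, 2 ≤ x → f x = c (ArithmeticFunction.cardFactors x)) :
    ¬ ∃ x y : Fin n → ℕ, (∀ i, 1 < x i) ∧ (∀ i, 1 < y i) ∧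
      (∃ col : X, (∀ i, f (x i) = col) ∧ (∀ i, f (y i) = col)) ∧
      ∀ i j, (i, j) ∈ R →
        (x i : ℝ) ^ (∏ k, (y k : ℝ) ^ (C k i j)) = (x j : ℝ) := by
  rintro ⟨x, y, hx, hy, ⟨col, hxc, hyc⟩, hE⟩
  apply hc
  set Om := ArithmeticFunction.cardFactors with hOm
  refine ⟨fun m => Om (y m), fun m => omega_pos (hy m), ⟨col, fun m => ?_⟩,
    fun i => (Om (Om (x i)) : ℤ), ?_⟩
  · rw [← hf (y m) (hy m), hyc]
  intro i j hij
  set A := ∏ k, y k ^ (C k i j).toNat with hA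
  set B := ∏ k, y k ^ (-(C k i j)).toNat with hB
  have hyne : ∀ k, y k ≠ 0 := fun k => by have := hy k; omega
  have hAne : A ≠ 0 := Finset.prod_ne_zero_iff.mpr fun k _ => pow_ne_zero _ (hyne k)
  have hBne : B ≠ 0 := Finset.prod_ne_zero_iff.mpr fun k _ => pow_ne_zero _ (hyne k)
  have hxpos : (0:ℝ) < (x i : ℝ) := by have := hx i; positivity
  -- real equality x i ^ A = x j ^ B
  have hreal : (x i : ℝ) ^ (A : ℕ) = (x j : ℝ) ^ (B : ℕ) := by
    have ht := hE i j hij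
    have hAB : (A : ℝ) = (∏ k, (y k : ℝ) ^ (C k i j)) * (B : ℝ) := by
      rw [hA, hB]
      push_cast
      rw [← Finset.prod_mul_distrib]
      refine Finset.prod_congr rfl fun k _ => ?_
      have hyk : (0:ℝ) < (y k : ℝ) := by have := hy k; positivity
      rw [← zpow_natCast ((y k : ℝ)) (C k i j).toNat, ← zpow_natCast ((y k : ℝ)) (-(C k i j)).toNat,
        ← zpow_add₀ (ne_of_gt hyk)]
      congr 1
      omega
    have : (x i : ℝ) ^ ((A : ℕ) : ℝ) = (x j : ℝ) ^ ((B : ℕ) : ℝ) := by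
      rw [hAB]
      push_cast
      rw [Real.rpow_mul hxpos.le, ht]
    rwa [Real.rpow_natCast, Real.rpow_natCast] at this
  have hnat : x i ^ A = x j ^ B := by exact_mod_cast hreal
  -- apply Ω
  have h1 : A * Om (x i) = B * Om (x j) := by
    have := congrArg Om hnat
    rwa [hOm, omega_pow _ _ (by have := hx i; omega), omega_pow _ _ (by have := hx j; omega)]
      at this
  have hOxi : Om (x i) ≠ 0 := (omega_pos (hx i)).ne'
  have hOxj : Om (x j) ≠ 0 := (omega_pos (hx j)).ne'
  -- apply Ω again
  have h2 : Om A + Om (Om (x i)) = Om B + Om (Om (x j)) := by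
    have := congrArg Om h1
    rwa [hOm, ArithmeticFunction.cardFactors_mul hAne hOxi,
      ArithmeticFunction.cardFactors_mul hBne hOxj] at this
  have hOA : Om A = ∑ k, (C k i j).toNat * Om (y k) := by
    rw [hA, hOm, omega_prod _ _ fun k _ => pow_ne_zero _ (hyne k)]
    exact Finset.sum_congr rfl fun k _ => omega_pow _ _ (hyne k)
  have hOB : Om B = ∑ k, (-(C k i j)).toNat * Om (y k) := by
    rw [hB, hOm, omega_prod _ _ fun k _ => pow_ne_zero _ (hyne k)]
    exact Finset.sum_congr rfl fun k _ => omega_pow _ _ (hyne k)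
  rw [hOA, hOB] at h2
  have h3 : (∑ k, ((C k i j).toNat : ℤ) * Om (y k)) + Om (Om (x i))
      = (∑ k, ((-(C k i j)).toNat : ℤ) * Om (y k)) + Om (Om (x j)) := by
    exact_mod_cast h2
  have h4 : ∑ m, C m i j * (Om (y m) : ℤ)
      = (∑ k, ((C k i j).toNat : ℤ) * Om (y k)) - ∑ k, ((-(C k i j)).toNat : ℤ) * Om (y k) := by
    rw [← Finset.sum_sub_distrib]
    refine Finset.sum_congr rfl fun k _ => ?_
    have hck : ((C k i j).toNat : ℤ) - ((-(C k i j)).toNat : ℤ) = C k i j := by omega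
    linear_combination (-(Om (y k) : ℤ)) * hck
  rw [h4]
  linarith [h3]
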